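/- Let {A_n} be a sequence of n×n symmetric matrices with nonnegative entries and zeros on the diagonal satisfying (BD) and (MF), fix (β, B) ∈ Θ, and let X be an observation from P_{n,β,B}. With b_i(x) := tanh(β m_i(x) + B), one has limsup_{n→∞} (1/n) E[ ( Σ_{i=1}^n (X_i − b_i(X)) m_i(X) )² ] < ∞, where E denotes expectation under P_{n,β,B}. -/

import Mathlib

open Filter

noncomputable section

/-- Spin configuration in `{-1,1}^n` encoded by a Boolean vector. -/
def spinVec (n : ℕ) (σ : Fin n → Bool) : Fin n → ℝ := fun i => if σ i then 1 else -1

/-- Local field `m_i(x) = ∑_j A i j * x j`. -/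
def mloc {n : ℕ} (A : Matrix (Fin n) (Fin n) ℝ) (x : Fin n → ℝ) (i : Fin n) : ℝ :=
  ∑ j, A i j * x j

/-- Average local field `m̄(x)`. -/
def mbar {n : ℕ} (A : Matrix (Fin n) (Fin n) ℝ) (x : Fin n → ℝ) : ℝ :=
  (1 / (n : ℝ)) * ∑ i, mloc A x i

/-- `T_n(x) = (1/n) ∑_i (m_i(x) - m̄(x))²`. -/
def Tstat {n : ℕ} (A : Matrix (Fin n) (Fin n) ℝ) (x : Fin n → ℝ) : ℝ :=
  (1 / (n : ℝ)) * ∑ i, (mloc A x i - mbar A x) ^ 2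

/-- Unnormalized Ising weight `exp((β/2) xᵀAx + B ∑ x_i)`. -/
def isingWt {n : ℕ} (A : Matrix (Fin n) (Fin n) ℝ) (β B : ℝ) (x : Fin n → ℝ) : ℝ :=
  Real.exp (β / 2 * ∑ i, ∑ j, A i j * x i * x j + B * ∑ i, x i)

/-- Probability of the event `E` under the Ising measure `P_{n,β,B}`. -/
def isingProb {n : ℕ} (A : Matrix (Fin n) (Fin n) ℝ) (β B : ℝ) (E : Set (Fin n → ℝ)) : ℝ :=
  (∑ σ : Fin n → Bool, E.indicator (isingWt A β B) (spinVec n σ)) /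
    (∑ σ : Fin n → Bool, isingWt A β B (spinVec n σ))

/-- Expectation of `f` under the Ising measure `P_{n,β,B}`. -/
def isingExp {n : ℕ} (A : Matrix (Fin n) (Fin n) ℝ) (β B : ℝ) (f : (Fin n → ℝ) → ℝ) : ℝ :=
  (∑ σ : Fin n → Bool, f (spinVec n σ) * isingWt A β B (spinVec n σ)) /
    (∑ σ : Fin n → Bool, isingWt A β B (spinVec n σ))

/-- Pseudo-likelihood equation `Q_n(β,B|x)`. -/
def Qfun {n : ℕ} (A : Matrix (Fin n) (Fin n) ℝ) (β B : ℝ) (x : Fin n → ℝ) : ℝ :=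
  ∑ i, mloc A x i * (x i - Real.tanh (β * mloc A x i + B))

/-- Pseudo-likelihood equation `R_n(β,B|x)`. -/
def Rfun {n : ℕ} (A : Matrix (Fin n) (Fin n) ℝ) (β B : ℝ) (x : Fin n → ℝ) : ℝ :=
  ∑ i, (x i - Real.tanh (β * mloc A x i + B))

/-- `b_i(x) = tanh(β m_i(x) + B)`. -/
def bvec {n : ℕ} (A : Matrix (Fin n) (Fin n) ℝ) (β B : ℝ) (x : Fin n → ℝ) : Fin n → ℝ :=
  fun i => Real.tanh (β * mloc A x i + B)

/-- `f_n(y) = (β/2) yᵀAy + B ∑ y_i`. -/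
def fN {n : ℕ} (A : Matrix (Fin n) (Fin n) ℝ) (β B : ℝ) (y : Fin n → ℝ) : ℝ :=
  β / 2 * ∑ i, ∑ j, A i j * y i * y j + B * ∑ i, y i

/-- Entropy term `I(y)` (with `0 log 0 = 0`, as `Real.log 0 = 0`). -/
def entI {n : ℕ} (y : Fin n → ℝ) : ℝ :=
  ∑ i, ((1 + y i) / 2 * Real.log ((1 + y i) / 2) + (1 - y i) / 2 * Real.log ((1 - y i) / 2))

section Aux

lemma myHasDerivAt_tanh (x : ℝ) : HasDerivAt Real.tanh (1 / Real.cosh x ^ 2) x := by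
  have h := (Real.hasDerivAt_sinh x).div (Real.hasDerivAt_cosh x) (ne_of_gt (Real.cosh_pos x))
  have hf : (fun y => Real.sinh y / Real.cosh y) = Real.tanh := by
    funext y; rw [Real.tanh_eq_sinh_div_cosh]
  rw [show (Real.sinh / Real.cosh) = Real.tanh from hf] at h
  have := Real.cosh_sq x
  rw [show Real.cosh x * Real.cosh x - Real.sinh x * Real.sinh x = 1 by nlinarith [Real.cosh_pos x]] at h
  exact h

lemma tanh_lip (a b : ℝ) : |Real.tanh a - Real.tanh b| ≤ |a - b| := by
  have hl : LipschitzWith 1 Real.tanh := by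
    apply lipschitzWith_of_nnnorm_deriv_le (fun x => (myHasDerivAt_tanh x).differentiableAt)
    intro x
    rw [(myHasDerivAt_tanh x).deriv]
    have h1 : (1:ℝ) ≤ Real.cosh x ^ 2 := by nlinarith [Real.one_le_cosh x]
    have h2 : (Real.cosh x ^ 2)⁻¹ ≤ 1 := by
      rw [inv_le_one_iff₀]; right; exact h1
    simpa [← NNReal.coe_le_coe, nnnorm, Real.norm_eq_abs, abs_of_pos,
      (show (0:ℝ) < (Real.cosh x ^ 2)⁻¹ by positivity)] using h2
  have := hl.dist_le_mul a b
  simpa [Real.dist_eq] using this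

lemma abs_tanh_le (a : ℝ) : |Real.tanh a| ≤ 1 := by
  rw [Real.tanh_eq_sinh_div_cosh, abs_div, abs_of_pos (Real.cosh_pos a),
    div_le_one (Real.cosh_pos a), Real.abs_sinh]
  exact le_of_lt ((Real.sinh_lt_cosh |a|).trans_eq (Real.cosh_abs a))

/-- `(−ε − tanh t)·e^{−2εt} = −(ε − tanh t)` for `ε = ±1`. -/
lemma scalar_cancel (ε t : ℝ) (hε : ε = 1 ∨ ε = -1) :
    (-ε - Real.tanh t) * Real.exp (-(2 * ε * t)) = -(ε - Real.tanh t) := by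
  have ha : (0:ℝ) < Real.exp t := Real.exp_pos t
  have hb : Real.exp (-t) = (Real.exp t)⁻¹ := Real.exp_neg t
  have htanh : Real.tanh t = (Real.exp t - (Real.exp t)⁻¹) / (Real.exp t + (Real.exp t)⁻¹) := by
    rw [Real.tanh_eq_sinh_div_cosh, Real.sinh_eq, Real.cosh_eq, hb]
    rw [div_div_div_eq]
    rw [mul_comm (Real.exp t - (Real.exp t)⁻¹) 2, mul_div_mul_left _ _ (two_ne_zero)]
  have hden : Real.exp t + (Real.exp t)⁻¹ > 0 := by positivity
  rcases hε with h | h <;> subst h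
  · have he : Real.exp (-(2 * (1:ℝ) * t)) = ((Real.exp t)^2)⁻¹ := by
      rw [show -(2 * (1:ℝ) * t) = -t + -t by ring, Real.exp_add, hb]; ring
    rw [he, htanh]
    field_simp
    ring
  · have he : Real.exp (-(2 * (-1:ℝ) * t)) = (Real.exp t)^2 := by
      rw [show -(2 * (-1:ℝ) * t) = t + t by ring, Real.exp_add]; ring
    rw [he, htanh]
    field_simp
    ring

/-- `|ε − tanh t| ≤ (1 + e^{−2εt})/2` for `ε = ±1`. -/
lemma scalar_bound (ε t : ℝ) (hε : ε = 1 ∨ ε = -1) :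
    |ε - Real.tanh t| ≤ (1 + Real.exp (-(2 * ε * t))) / 2 := by
  have ha : (0:ℝ) < Real.exp t := Real.exp_pos t
  have hb : Real.exp (-t) = (Real.exp t)⁻¹ := Real.exp_neg t
  have htanh : Real.tanh t = (Real.exp t - (Real.exp t)⁻¹) / (Real.exp t + (Real.exp t)⁻¹) := by
    rw [Real.tanh_eq_sinh_div_cosh, Real.sinh_eq, Real.cosh_eq, hb]
    rw [div_div_div_eq]
    rw [mul_comm (Real.exp t - (Real.exp t)⁻¹) 2, mul_div_mul_left _ _ (two_ne_zero)]
  have hden : (0:ℝ) < Real.exp t + (Real.exp t)⁻¹ := by positivity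
  rcases hε with h | h <;> subst h
  · have he : Real.exp (-(2 * (1:ℝ) * t)) = ((Real.exp t)^2)⁻¹ := by
      rw [show -(2 * (1:ℝ) * t) = -t + -t by ring, Real.exp_add, hb]; ring
    have h1 : (1:ℝ) - Real.tanh t = 2 * (Real.exp t)⁻¹ / (Real.exp t + (Real.exp t)⁻¹) := by
      rw [htanh]; field_simp; ring
    have hpos : (0:ℝ) ≤ 1 - Real.tanh t := by
      rw [h1]; positivity
    rw [abs_of_nonneg hpos, h1, he, div_le_div_iff₀ hden (by norm_num : (0:ℝ) < 2)]
    have hinv : Real.exp t * (Real.exp t)⁻¹ = 1 := mul_inv_cancel₀ (ne_of_gt ha)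
    have hsq : (Real.exp t ^ 2)⁻¹ = (Real.exp t)⁻¹ * (Real.exp t)⁻¹ := by
      rw [sq, mul_inv]
    rw [hsq]
    nlinarith [sq_nonneg ((Real.exp t)⁻¹ * (Real.exp t)⁻¹ - 1), inv_pos.mpr ha, hinv]
  · have he : Real.exp (-(2 * (-1:ℝ) * t)) = (Real.exp t)^2 := by
      rw [show -(2 * (-1:ℝ) * t) = t + t by ring, Real.exp_add]; ring
    have h1 : (-1:ℝ) - Real.tanh t = -(2 * Real.exp t / (Real.exp t + (Real.exp t)⁻¹)) := by
      rw [htanh]; field_simp; ring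
    rw [h1, abs_neg, abs_of_nonneg (by positivity), he,
      div_le_div_iff₀ hden (by norm_num : (0:ℝ) < 2)]
    nlinarith [sq_nonneg (Real.exp t - (Real.exp t)⁻¹), sq_nonneg ((Real.exp t)⁻¹),
      mul_inv_cancel₀ (ne_of_gt ha)]

end Aux

section Struct

variable {n : ℕ}

lemma spinVec_abs (σ : Fin n → Bool) (j : Fin n) : |spinVec n σ j| ≤ 1 := by
  unfold spinVec; by_cases h : σ j <;> simp [h]

lemma spinVec_pm (σ : Fin n → Bool) (j : Fin n) : spinVec n σ j = 1 ∨ spinVec n σ j = -1 := by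
  unfold spinVec; by_cases h : σ j <;> simp [h]

lemma spin_flip (σ : Fin n → Bool) (i : Fin n) :
    spinVec n (Function.update σ i (!σ i)) =
      Function.update (spinVec n σ) i (-(spinVec n σ i)) := by
  funext j
  by_cases h : j = i
  · subst h; by_cases hσ : σ j <;> simp [spinVec, hσ]
  · simp [spinVec, Function.update_of_ne h]

lemma spin_flip_flip (σ : Fin n → Bool) (i : Fin n) :
    Function.update (Function.update σ i (!σ i)) i (!(Function.update σ i (!σ i)) i) = σ := by
  funext j
  by_cases h : j = i
  · subst h; simp
  · simp [Function.update_of_ne h]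

lemma mloc_update (A : Matrix (Fin n) (Fin n) ℝ) (x : Fin n → ℝ) (i j : Fin n) (c : ℝ) :
    mloc A (Function.update x i c) j = mloc A x j + A j i * (c - x i) := by
  unfold mloc
  have h : ∀ k, Function.update x i c k = x k + (if k = i then c - x i else 0) := by
    intro k; by_cases h : k = i
    · subst h; simp
    · simp [Function.update_of_ne h, h]
  simp only [h, mul_add, Finset.sum_add_distrib, mul_ite, mul_zero,
    Finset.sum_ite_eq', Finset.mem_univ, if_true]

lemma isingWt_pos (A : Matrix (Fin n) (Fin n) ℝ) (β B : ℝ) (x : Fin n → ℝ) :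
    0 < isingWt A β B x := Real.exp_pos _

lemma isingWt_update (A : Matrix (Fin n) (Fin n) ℝ) (hsymm : A.IsSymm)
    (hdiag : ∀ i, A i i = 0) (β B : ℝ) (x : Fin n → ℝ) (i : Fin n) :
    isingWt A β B (Function.update x i (-(x i))) =
      Real.exp (-(2 * x i * (β * mloc A x i + B))) * isingWt A β B x := by
  unfold isingWt
  rw [← Real.exp_add]
  congr 1
  have hx' : ∀ k, Function.update x i (-(x i)) k = x k + (if k = i then -2 * x i else 0) := by
    intro k; by_cases h : k = i
    · subst h; simp; ring
    · simp [Function.update_of_ne h, h]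
  have hT : ∑ k, Function.update x i (-(x i)) k = (∑ k, x k) + (-2 * x i) := by
    simp only [hx', Finset.sum_add_distrib, Finset.sum_ite_eq', Finset.mem_univ, if_true]
  have hS : ∑ j, ∑ k, A j k * Function.update x i (-(x i)) j * Function.update x i (-(x i)) k
      = (∑ j, ∑ k, A j k * x j * x k) - 4 * x i * mloc A x i := by
    have expand : ∀ j k : Fin n,
        A j k * Function.update x i (-(x i)) j * Function.update x i (-(x i)) k
        = A j k * x j * x k + (if j = i then -2 * x i * (A j k * x k) else 0)
          + (if k = i then -2 * x i * (A j k * x j) else 0)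
          + (if j = i then (if k = i then A j k * (4 * x i ^ 2) else 0) else 0) := by
      intro j k
      by_cases hj : j = i <;> by_cases hk : k = i <;>
        simp [hj, hk, hx'] <;> ring
    have e3 : ∑ j : Fin n, A j i * x j = mloc A x i := by
      unfold mloc; exact Finset.sum_congr rfl fun j _ => by rw [hsymm.apply]
    have t1 : ∑ j : Fin n, ∑ k : Fin n, (if j = i then -2 * x i * (A j k * x k) else 0)
        = -2 * x i * mloc A x i := by
      rw [Finset.sum_eq_single i]
      · simp only [if_pos rfl, eq_self_iff_true, if_true, ← Finset.mul_sum]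
        rfl
      · intro j _ hj; simp [hj]
      · simp
    have t3 : ∑ j : Fin n, ∑ k : Fin n, (if k = i then -2 * x i * (A j k * x j) else 0)
        = -2 * x i * mloc A x i := by
      have hj : ∀ j : Fin n, ∑ k : Fin n, (if k = i then -2 * x i * (A j k * x j) else 0)
          = -2 * x i * (A j i * x j) := by
        intro j; rw [Finset.sum_ite_eq']; simp
      simp only [hj]
      rw [← Finset.mul_sum, e3]
    have t4 : ∑ j : Fin n, ∑ k : Fin n,
        (if j = i then (if k = i then A j k * (4 * x i ^ 2) else 0) else 0) = 0 := by
      rw [Finset.sum_eq_single i]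
      · simp only [if_pos rfl, Finset.sum_ite_eq', Finset.mem_univ, if_true, hdiag i]
        ring
      · intro j _ hj; simp [hj]
      · simp
    simp only [expand, Finset.sum_add_distrib]
    rw [t1, t3, t4]
    ring
  rw [hS, hT]
  ring

end Struct

section Pairing

variable {n : ℕ}

/-- The spin-flip at site `i` as a permutation of configurations. -/
def flipPerm (i : Fin n) : Equiv.Perm (Fin n → Bool) :=
  Function.Involutive.toPerm (fun σ => Function.update σ i (!σ i))
    (fun σ => spin_flip_flip σ i)

lemma flipPerm_apply (i : Fin n) (σ : Fin n → Bool) :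
    flipPerm i σ = Function.update σ i (!σ i) := rfl

/-- Key pairing bound: the Gibbs average of `(x_i - b_i) g(x)` is controlled by the
maximal increment of `g` under a spin flip at `i`. -/
lemma pair_sum_bound (A : Matrix (Fin n) (Fin n) ℝ) (hsymm : A.IsSymm)
    (hdiag : ∀ i, A i i = 0) (β B : ℝ) (i : Fin n) (g : (Fin n → ℝ) → ℝ) (M : ℝ)
    (hM : ∀ σ : Fin n → Bool,
      |g (spinVec n σ) - g (spinVec n (Function.update σ i (!σ i)))| ≤ M) :
    |∑ σ : Fin n → Bool,
        (spinVec n σ i - bvec A β B (spinVec n σ) i) * g (spinVec n σ) *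
          isingWt A β B (spinVec n σ)|
      ≤ M / 2 * ∑ σ : Fin n → Bool, isingWt A β B (spinVec n σ) := by
  classical
  set h : (Fin n → Bool) → ℝ := fun σ =>
    (spinVec n σ i - bvec A β B (spinVec n σ) i) * g (spinVec n σ) *
      isingWt A β B (spinVec n σ) with hh
  set W : (Fin n → Bool) → ℝ := fun σ => isingWt A β B (spinVec n σ) with hW
  have hflip_sum : ∀ F : (Fin n → Bool) → ℝ,
      ∑ σ : Fin n → Bool, F (flipPerm i σ) = ∑ σ : Fin n → Bool, F σ :=
    fun F => Equiv.sum_comp (flipPerm i) F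
  -- pointwise bound on paired term
  have hpair : ∀ σ : Fin n → Bool,
      |h σ + h (flipPerm i σ)| ≤ (W σ + W (flipPerm i σ)) / 2 * M := by
    intro σ
    set x : Fin n → ℝ := spinVec n σ with hx
    have hx' : spinVec n (Function.update σ i (!σ i)) = Function.update x i (-(x i)) :=
      spin_flip σ i
    set t : ℝ := β * mloc A x i + B with ht
    have hmi : mloc A (Function.update x i (-(x i))) i = mloc A x i := by
      rw [mloc_update, hdiag i]; ring
    have hb' : bvec A β B (Function.update x i (-(x i))) i = Real.tanh t := by
      unfold bvec; rw [hmi]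
    have hb : bvec A β B x i = Real.tanh t := rfl
    have hWup : isingWt A β B (Function.update x i (-(x i))) =
        Real.exp (-(2 * x i * t)) * isingWt A β B x :=
      isingWt_update A hsymm hdiag β B x i
    have hxi' : Function.update x i (-(x i)) i = -(x i) := Function.update_self i _ x
    have hcancel : (Function.update x i (-(x i)) i - Real.tanh t) *
        isingWt A β B (Function.update x i (-(x i)))
        = -((x i - Real.tanh t) * isingWt A β B x) := by
      rw [hxi', hWup, show (-(x i) - Real.tanh t) * (Real.exp (-(2 * x i * t)) * isingWt A β B x)
        = ((-(x i) - Real.tanh t) * Real.exp (-(2 * x i * t))) * isingWt A β B x by ring,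
        scalar_cancel (x i) t (spinVec_pm σ i)]
      ring
    have hheq : h σ + h (flipPerm i σ)
        = ((x i - Real.tanh t) * isingWt A β B x) *
            (g x - g (Function.update x i (-(x i)))) := by
      simp only [hh, flipPerm_apply, hx']
      rw [hb', hb, ← hx]
      linear_combination g (Function.update x i (-(x i))) * hcancel
    rw [hheq]
    have hWpos : 0 < isingWt A β B x := isingWt_pos A β B x
    have hgb : |g x - g (Function.update x i (-(x i)))| ≤ M := by
      have := hM σ; rw [hx'] at this; exact this
    have hsb : |x i - Real.tanh t| ≤ (1 + Real.exp (-(2 * x i * t))) / 2 :=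
      scalar_bound (x i) t (spinVec_pm σ i)
    have hWW : (W σ + W (flipPerm i σ)) / 2
        = (1 + Real.exp (-(2 * x i * t))) / 2 * isingWt A β B x := by
      simp only [hW, flipPerm_apply, hx']
      rw [hWup]; ring
    rw [abs_mul, abs_mul, abs_of_pos hWpos, hWW]
    have hM0 : 0 ≤ M := le_trans (abs_nonneg _) (hM σ)
    apply mul_le_mul _ hgb (abs_nonneg _) (by positivity)
    exact mul_le_mul_of_nonneg_right hsb hWpos.le
  -- assemble
  have h2 : (∑ σ : Fin n → Bool, h σ) * 2
      = ∑ σ : Fin n → Bool, (h σ + h (flipPerm i σ)) := by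
    rw [Finset.sum_add_distrib, hflip_sum h]; ring
  have habs : |∑ σ : Fin n → Bool, h σ| * 2
      ≤ ∑ σ : Fin n → Bool, (W σ + W (flipPerm i σ)) / 2 * M := by
    calc |∑ σ : Fin n → Bool, h σ| * 2
        = |(∑ σ : Fin n → Bool, h σ) * 2| := by rw [abs_mul]; simp
      _ = |∑ σ : Fin n → Bool, (h σ + h (flipPerm i σ))| := by rw [h2]
      _ ≤ ∑ σ : Fin n → Bool, |h σ + h (flipPerm i σ)| := Finset.abs_sum_le_sum_abs _ _
      _ ≤ ∑ σ : Fin n → Bool, (W σ + W (flipPerm i σ)) / 2 * M :=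
          Finset.sum_le_sum fun σ _ => hpair σ
  have hsum2 : ∑ σ : Fin n → Bool, (W σ + W (flipPerm i σ)) / 2 * M
      = M * ∑ σ : Fin n → Bool, W σ := by
    have : ∀ σ : Fin n → Bool, (W σ + W (flipPerm i σ)) / 2 * M
        = M / 2 * W σ + M / 2 * W (flipPerm i σ) := fun σ => by ring
    simp only [this]
    rw [Finset.sum_add_distrib, ← Finset.mul_sum, ← Finset.mul_sum, hflip_sum W]
    ring
  rw [hsum2] at habs
  linarith

end Pairing

section Increment

variable {n : ℕ}

lemma mloc_abs (A : Matrix (Fin n) (Fin n) ℝ) (hnn : ∀ j k, 0 ≤ A j k) (γ : ℝ)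
    (hrow : ∀ j, ∑ k, A j k ≤ γ) (x : Fin n → ℝ) (hx : ∀ k, |x k| ≤ 1) (j : Fin n) :
    |mloc A x j| ≤ γ := by
  unfold mloc
  calc |∑ k, A j k * x k| ≤ ∑ k, |A j k * x k| := Finset.abs_sum_le_sum_abs _ _
    _ ≤ ∑ k, A j k := by
        apply Finset.sum_le_sum
        intro k _
        rw [abs_mul, abs_of_nonneg (hnn j k)]
        calc A j k * |x k| ≤ A j k * 1 := by
              exact mul_le_mul_of_nonneg_left (hx k) (hnn j k)
          _ = A j k := mul_one _
    _ ≤ γ := hrow j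

lemma spin_update_abs (σ : Fin n → Bool) (i k : Fin n) :
    |Function.update (spinVec n σ) i (-(spinVec n σ i)) k| ≤ 1 := by
  by_cases h : k = i
  · subst h; rw [Function.update_self, abs_neg]; exact spinVec_abs σ k
  · rw [Function.update_of_ne h]; exact spinVec_abs σ k

/-- Increment bound for `g(x) = m_i(x) · F(x)` under a spin flip at `i`. -/
lemma incr_bound (A : Matrix (Fin n) (Fin n) ℝ) (hsymm : A.IsSymm)
    (hnn : ∀ j k, 0 ≤ A j k) (hdiag : ∀ i, A i i = 0) (γ : ℝ) (hγ : 0 ≤ γ)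
    (hrow : ∀ j, ∑ k, A j k ≤ γ) (β B : ℝ) (hβ : 0 ≤ β) (i : Fin n) (σ : Fin n → Bool) :
    |(mloc A (spinVec n σ) i * ∑ j, (spinVec n σ j - bvec A β B (spinVec n σ) j) *
        mloc A (spinVec n σ) j) -
      (mloc A (spinVec n (Function.update σ i (!σ i))) i *
        ∑ j, (spinVec n (Function.update σ i (!σ i)) j -
          bvec A β B (spinVec n (Function.update σ i (!σ i))) j) *
            mloc A (spinVec n (Function.update σ i (!σ i))) j)|
    ≤ γ * ((4 + 2 * β * γ) * γ + 2 * γ) := by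
  classical
  set x : Fin n → ℝ := spinVec n σ with hx
  have hx' : spinVec n (Function.update σ i (!σ i)) = Function.update x i (-(x i)) :=
    spin_flip σ i
  set x' : Fin n → ℝ := Function.update x i (-(x i)) with hxd
  rw [hx']
  have hxabs : ∀ k, |x k| ≤ 1 := spinVec_abs σ
  have hx'abs : ∀ k, |x' k| ≤ 1 := spin_update_abs σ i
  have hmi : mloc A x' i = mloc A x i := by
    rw [hxd, mloc_update, hdiag i]; ring
  have hmabs : ∀ j, |mloc A x j| ≤ γ := mloc_abs A hnn γ hrow x hxabs
  have hm'abs : ∀ j, |mloc A x' j| ≤ γ := mloc_abs A hnn γ hrow x' hx'abs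
  have hdm : ∀ j, mloc A x' j = mloc A x j + A j i * (-2 * x i) := by
    intro j; rw [hxd, mloc_update]; ring
  -- termwise bound on the difference of F
  have hterm : ∀ j : Fin n,
      |(x j - bvec A β B x j) * mloc A x j - (x' j - bvec A β B x' j) * mloc A x' j|
        ≤ (4 + 2 * β * γ) * A i j + (if j = i then 2 * γ else 0) := by
    intro j
    by_cases h : j = i
    · subst h
      have hxj' : x' j = -(x j) := Function.update_self j _ x
      have hbj' : bvec A β B x' j = bvec A β B x j := by
        unfold bvec; rw [hmi]
      rw [hxj', hbj', hmi, if_pos rfl, hdiag j,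
        show (x j - bvec A β B x j) * mloc A x j -
          (-(x j) - bvec A β B x j) * mloc A x j = 2 * (x j * mloc A x j) by ring]
      rw [abs_mul, abs_mul, abs_of_nonneg (by norm_num : (0:ℝ) ≤ 2)]
      have h1 : |x j| * |mloc A x j| ≤ 1 * γ := by
        apply mul_le_mul (hxabs j) (hmabs j) (abs_nonneg _) zero_le_one
      calc (2:ℝ) * (|x j| * |mloc A x j|) ≤ 2 * (1 * γ) := by linarith
        _ = (4 + 2 * β * γ) * 0 + 2 * γ := by ring
    · have hxj' : x' j = x j := Function.update_of_ne h _ x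
      have hAji : A j i = A i j := hsymm.apply i j
      have hdmj : |mloc A x' j - mloc A x j| ≤ 2 * A i j := by
        rw [hdm j, show mloc A x j + A j i * (-2 * x i) - mloc A x j
          = A j i * (-2 * x i) by ring, abs_mul, hAji, abs_of_nonneg (hnn i j)]
        rw [show |(-2 : ℝ) * x i| = 2 * |x i| by rw [abs_mul]; norm_num]
        calc A i j * (2 * |x i|) ≤ A i j * (2 * 1) := by
              apply mul_le_mul_of_nonneg_left _ (hnn i j)
              linarith [hxabs i]
          _ = 2 * A i j := by ring
      have hdb : |bvec A β B x' j - bvec A β B x j| ≤ 2 * β * A i j := by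
        unfold bvec
        calc |Real.tanh (β * mloc A x' j + B) - Real.tanh (β * mloc A x j + B)|
            ≤ |(β * mloc A x' j + B) - (β * mloc A x j + B)| := tanh_lip _ _
          _ = β * |mloc A x' j - mloc A x j| := by
              rw [show (β * mloc A x' j + B) - (β * mloc A x j + B)
                = β * (mloc A x' j - mloc A x j) by ring, abs_mul, abs_of_nonneg hβ]
          _ ≤ β * (2 * A i j) := mul_le_mul_of_nonneg_left hdmj hβ
          _ = 2 * β * A i j := by ring
      have hxb : |x j - bvec A β B x j| ≤ 2 := by
        calc |x j - bvec A β B x j| ≤ |x j| + |bvec A β B x j| := abs_sub _ _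
          _ ≤ 1 + 1 := add_le_add (hxabs j) (abs_tanh_le _)
          _ = 2 := by norm_num
      rw [hxj', if_neg h]
      calc |(x j - bvec A β B x j) * mloc A x j - (x j - bvec A β B x' j) * mloc A x' j|
          = |(x j - bvec A β B x j) * (mloc A x j - mloc A x' j)
              + (bvec A β B x' j - bvec A β B x j) * mloc A x' j| := by ring_nf
        _ ≤ |(x j - bvec A β B x j) * (mloc A x j - mloc A x' j)|
              + |(bvec A β B x' j - bvec A β B x j) * mloc A x' j| := abs_add_le _ _
        _ ≤ 2 * (2 * A i j) + (2 * β * A i j) * γ := by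
            apply add_le_add
            · rw [abs_mul]
              apply mul_le_mul hxb _ (abs_nonneg _) (by norm_num)
              rw [abs_sub_comm]; exact hdmj
            · rw [abs_mul]
              apply mul_le_mul hdb (hm'abs j) (abs_nonneg _)
              exact mul_nonneg (mul_nonneg (by norm_num) hβ) (hnn i j)
        _ = (4 + 2 * β * γ) * A i j + 0 := by ring
        _ ≤ (4 + 2 * β * γ) * A i j + 0 := le_refl _
  -- sum up
  have hFdiff : |(∑ j, (x j - bvec A β B x j) * mloc A x j)
      - ∑ j, (x' j - bvec A β B x' j) * mloc A x' j|
      ≤ (4 + 2 * β * γ) * γ + 2 * γ := by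
    rw [← Finset.sum_sub_distrib]
    calc |∑ j, ((x j - bvec A β B x j) * mloc A x j
          - (x' j - bvec A β B x' j) * mloc A x' j)|
        ≤ ∑ j, |(x j - bvec A β B x j) * mloc A x j
            - (x' j - bvec A β B x' j) * mloc A x' j| := Finset.abs_sum_le_sum_abs _ _
      _ ≤ ∑ j, ((4 + 2 * β * γ) * A i j + (if j = i then 2 * γ else 0)) :=
          Finset.sum_le_sum fun j _ => hterm j
      _ = (4 + 2 * β * γ) * (∑ j, A i j) + 2 * γ := by
          rw [Finset.sum_add_distrib, ← Finset.mul_sum, Finset.sum_ite_eq']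
          simp
      _ ≤ (4 + 2 * β * γ) * γ + 2 * γ := by
          have h1 : (0:ℝ) ≤ 4 + 2 * β * γ := by positivity
          have h2 : ∑ j, A i j ≤ γ := hrow i
          nlinarith
  rw [hmi, show mloc A x i * (∑ j, (x j - bvec A β B x j) * mloc A x j)
      - mloc A x i * (∑ j, (x' j - bvec A β B x' j) * mloc A x' j)
      = mloc A x i * ((∑ j, (x j - bvec A β B x j) * mloc A x j)
        - ∑ j, (x' j - bvec A β B x' j) * mloc A x' j) by ring, abs_mul]
  apply mul_le_mul (hmabs i) hFdiff (abs_nonneg _) hγ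

end Increment

/-- `limsup (1/n) E[(∑ᵢ (Xᵢ - bᵢ(X)) mᵢ(X))²] < ∞`. -/
theorem stmt12 (A : (n : ℕ) → Matrix (Fin n) (Fin n) ℝ)
    (hsymm : ∀ n, (A n).IsSymm)
    (hnonneg : ∀ n, ∀ i j : Fin n, 0 ≤ A n i j)
    (hdiag : ∀ n, ∀ i : Fin n, A n i i = 0)
    (hBD : ∃ γ : ℝ, ∀ n, ∀ i : Fin n, (∑ j, A n i j) ≤ γ)
    (hMF : Tendsto (fun n : ℕ => (1 / (n : ℝ)) * ∑ i, ∑ j, (A n i j) ^ 2) atTop (nhds 0))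
    (β B : ℝ) (hβ : 0 < β) (hB : B ≠ 0) :
    IsBoundedUnder (· ≤ ·) atTop (fun n : ℕ => (1 / (n : ℝ)) * isingExp (A n) β B
      (fun x => (∑ i, (x i - bvec (A n) β B x i) * mloc (A n) x i) ^ 2)) := by
  classical
  obtain ⟨γ, hγ⟩ := hBD
  set γ₀ : ℝ := max γ 0 with hγ₀def
  have hγ₀ : 0 ≤ γ₀ := le_max_right γ 0
  have hrow : ∀ n, ∀ i : Fin n, (∑ j, A n i j) ≤ γ₀ :=
    fun n i => (hγ n i).trans (le_max_left γ 0)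
  have hβ0 : 0 ≤ β := hβ.le
  set M0 : ℝ := γ₀ * ((4 + 2 * β * γ₀) * γ₀ + 2 * γ₀) with hM0def
  have hM0 : 0 ≤ M0 := by
    have h1 : 0 ≤ 2 * β * γ₀ := mul_nonneg (mul_nonneg (by norm_num) hβ0) hγ₀
    have h2 : 0 ≤ (4 + 2 * β * γ₀) * γ₀ + 2 * γ₀ := by nlinarith
    exact mul_nonneg hγ₀ h2
  apply isBoundedUnder_of
  refine ⟨M0 / 2, fun n => ?_⟩
  by_cases hn : n = 0
  · subst hn
    simp only [Nat.cast_zero, div_zero, zero_mul]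
    norm_num
    linarith
  · have hnR : (0:ℝ) < (n:ℝ) := by
      exact_mod_cast Nat.pos_of_ne_zero hn
    set An := A n with hAn
    set Z : ℝ := ∑ σ : Fin n → Bool, isingWt An β B (spinVec n σ) with hZdef
    have hZ : 0 < Z := by
      apply Finset.sum_pos (fun σ _ => isingWt_pos An β B (spinVec n σ))
      exact Finset.univ_nonempty
    -- per-site pairing bound
    have key : ∀ i : Fin n,
        |∑ σ : Fin n → Bool,
            (spinVec n σ i - bvec An β B (spinVec n σ) i) *
              (fun x => mloc An x i * ∑ j, (x j - bvec An β B x j) * mloc An x j)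
                (spinVec n σ) *
              isingWt An β B (spinVec n σ)|
          ≤ M0 / 2 * Z := fun i =>
      pair_sum_bound An (hsymm n) (fun j => hdiag n j) β B i
        (fun x => mloc An x i * ∑ j, (x j - bvec An β B x j) * mloc An x j) M0
        (fun σ => incr_bound An (hsymm n) (fun j k => hnonneg n j k) (fun j => hdiag n j)
          γ₀ hγ₀ (hrow n) β B hβ0 i σ)
    -- rewrite the numerator
    have stepA : (∑ σ : Fin n → Bool,
          (∑ i, (spinVec n σ i - bvec An β B (spinVec n σ) i) * mloc An (spinVec n σ) i) ^ 2
            * isingWt An β B (spinVec n σ))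
        = ∑ i : Fin n, ∑ σ : Fin n → Bool,
            (spinVec n σ i - bvec An β B (spinVec n σ) i) *
              (mloc An (spinVec n σ) i *
                ∑ j, (spinVec n σ j - bvec An β B (spinVec n σ) j) * mloc An (spinVec n σ) j) *
              isingWt An β B (spinVec n σ) := by
      rw [Finset.sum_comm]
      apply Finset.sum_congr rfl
      intro σ _
      rw [sq, Finset.sum_mul, Finset.sum_mul]
      exact Finset.sum_congr rfl fun i _ => by ring
    have hNle : (∑ σ : Fin n → Bool,
          (∑ i, (spinVec n σ i - bvec An β B (spinVec n σ) i) * mloc An (spinVec n σ) i) ^ 2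
            * isingWt An β B (spinVec n σ))
        ≤ (n : ℝ) * (M0 / 2) * Z := by
      rw [stepA]
      calc (∑ i : Fin n, ∑ σ : Fin n → Bool,
            (spinVec n σ i - bvec An β B (spinVec n σ) i) *
              (mloc An (spinVec n σ) i *
                ∑ j, (spinVec n σ j - bvec An β B (spinVec n σ) j) * mloc An (spinVec n σ) j) *
              isingWt An β B (spinVec n σ))
          ≤ ∑ i : Fin n, |∑ σ : Fin n → Bool,
              (spinVec n σ i - bvec An β B (spinVec n σ) i) *
                (mloc An (spinVec n σ) i *
                  ∑ j, (spinVec n σ j - bvec An β B (spinVec n σ) j) * mloc An (spinVec n σ) j) *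
                isingWt An β B (spinVec n σ)| :=
            Finset.sum_le_sum fun i _ => le_abs_self _
        _ ≤ ∑ _i : Fin n, M0 / 2 * Z := Finset.sum_le_sum fun i _ => key i
        _ = (n : ℝ) * (M0 / 2) * Z := by
            rw [Finset.sum_const, Finset.card_univ, Fintype.card_fin, nsmul_eq_mul]
            ring
    -- conclude
    have hExp : isingExp An β B
        (fun x => (∑ i, (x i - bvec An β B x i) * mloc An x i) ^ 2) ≤ (n : ℝ) * (M0 / 2) := by
      unfold isingExp
      rw [div_le_iff₀ hZ]
      exact hNle
    calc (1 / (n : ℝ)) * isingExp An β B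
          (fun x => (∑ i, (x i - bvec An β B x i) * mloc An x i) ^ 2)
        ≤ (1 / (n : ℝ)) * ((n : ℝ) * (M0 / 2)) := by
          apply mul_le_mul_of_nonneg_left hExp
          positivity
      _ = M0 / 2 := by
          field_simp
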